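/- Let Σ_n act on the exterior algebra Λ_{F_2}(a_1, ..., a_n) over the field with two elements by permuting the generators. Then the elements 1, σ_1, σ_2, ..., σ_n form an F_2-vector space basis for the ring of invariants Λ(a_1,...,a_n)^{Σ_n}, where σ_i is the i-th elementary symmetric polynomial (orbit sum of a_1⋯a_i). -/

import Mathlib

open MvPolynomial

/-- The ideal of squares of generators; over `F₂` the quotient of the polynomial ring by this
ideal is the exterior algebra `Λ_{F₂}(a_1, …, a_n)`. -/
noncomputable def sqIdeal (n : ℕ) : Ideal (MvPolynomial (Fin n) (ZMod 2)) :=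
  Ideal.span (Set.range fun i : Fin n => (X i : MvPolynomial (Fin n) (ZMod 2)) ^ 2)

/-- The exterior algebra `Λ_{F₂}(a_1, …, a_n)`, modeled (char 2) as `F₂[a]/(aᵢ²)`. -/
noncomputable abbrev ExtF2 (n : ℕ) : Type :=
  MvPolynomial (Fin n) (ZMod 2) ⧸ sqIdeal n

/-- The action of a permutation `g ∈ Σ_n` on `Λ_{F₂}(a_1,…,a_n)` by permuting generators. -/
noncomputable def permAct (n : ℕ) (g : Equiv.Perm (Fin n)) : ExtF2 n →ₐ[ZMod 2] ExtF2 n :=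
  Ideal.Quotient.liftₐ (sqIdeal n)
    ((Ideal.Quotient.mkₐ (ZMod 2) (sqIdeal n)).comp (rename g : _ →ₐ[ZMod 2] _))
    (by
      intro a ha
      refine Submodule.span_induction ?_ ?_ ?_ ?_ ha
      · rintro _ ⟨i, rfl⟩
        rw [AlgHom.comp_apply, map_pow, rename_X, Ideal.Quotient.mkₐ_eq_mk,
          Ideal.Quotient.eq_zero_iff_mem]
        exact Ideal.subset_span ⟨g i, rfl⟩
      · exact map_zero _
      · intro x y _ _ hx hy; rw [map_add, hx, hy, add_zero]
      · intro c x _ hx; rw [smul_eq_mul, map_mul, hx, mul_zero])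

/-- The `F₂`-subspace of `Σ_n`-invariants of `Λ_{F₂}(a_1,…,a_n)`. -/
noncomputable def invSubmodule (n : ℕ) : Submodule (ZMod 2) (ExtF2 n) where
  carrier := {x | ∀ g : Equiv.Perm (Fin n), permAct n g x = x}
  add_mem' := fun hx hy => by intro g; rw [map_add, hx g, hy g]
  zero_mem' := fun g => map_zero _
  smul_mem' := fun c x hx => by intro g; rw [map_smul, hx g]

/-! ### Auxiliary material -/

/-- The squarefree exponent vector attached to a finite set of variables. -/
noncomputable def msf {n : ℕ} (S : Finset (Fin n)) : Fin n →₀ ℕ :=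
  ∑ i ∈ S, Finsupp.single i 1

lemma msf_apply {n : ℕ} (S : Finset (Fin n)) (j : Fin n) :
    msf S j = if j ∈ S then 1 else 0 := by
  classical
  simp [msf, Finsupp.finset_sum_apply, Finsupp.single_apply]

lemma msf_apply_le_one {n : ℕ} (S : Finset (Fin n)) (j : Fin n) : msf S j ≤ 1 := by
  rw [msf_apply]; split <;> omega

lemma msf_injective {n : ℕ} : Function.Injective (msf (n := n)) := by
  intro S T h
  ext i
  have := congrArg (fun f => f i) h
  simp only [msf_apply] at this
  by_cases hS : i ∈ S <;> by_cases hT : i ∈ T <;> simp_all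

lemma eq_msf_of_le_one {n : ℕ} {d : Fin n →₀ ℕ} (hd : ∀ i, d i ≤ 1) :
    d = msf d.support := by
  ext i
  rw [msf_apply]
  by_cases h : i ∈ d.support
  · have h1 := hd i
    have h2 : d i ≠ 0 := Finsupp.mem_support_iff.mp h
    simp only [h, if_true]; omega
  · simp [h, Finsupp.notMem_support_iff.mp h]

lemma msf_mapDomain {n : ℕ} (g : Equiv.Perm (Fin n)) (S : Finset (Fin n)) :
    (msf S).mapDomain g = msf (S.image g) := by
  classical
  rw [msf, Finsupp.mapDomain_finset_sum]
  simp only [Finsupp.mapDomain_single]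
  rw [msf, Finset.sum_image (fun a _ b _ h => g.injective h)]

lemma prod_X_eq {n : ℕ} (S : Finset (Fin n)) :
    (∏ i ∈ S, X i : MvPolynomial (Fin n) (ZMod 2)) = monomial (msf S) 1 := by
  classical
  induction S using Finset.induction with
  | empty => simp [msf]
  | insert a S' h ih =>
      have hm : msf (insert a S') = Finsupp.single a 1 + msf S' := by
        simp only [msf]; exact Finset.sum_insert h
      rw [Finset.prod_insert h, ih, X, monomial_mul, one_mul, hm]

lemma coeff_msf_esymm {n : ℕ} (S : Finset (Fin n)) (k : ℕ) :
    coeff (msf S) (esymm (Fin n) (ZMod 2) k) = if S.card = k then 1 else 0 := by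
  classical
  rw [esymm, coeff_sum]
  have : ∀ t ∈ Finset.powersetCard k (Finset.univ : Finset (Fin n)),
      coeff (msf S) (∏ i ∈ t, X i : MvPolynomial (Fin n) (ZMod 2))
        = if t = S then 1 else 0 := by
    intro t _
    rw [prod_X_eq, coeff_monomial]
    congr 1
    simp only [eq_iff_iff]
    exact ⟨fun h => msf_injective h, fun h => by rw [h]⟩
  rw [Finset.sum_congr rfl this, Finset.sum_ite_eq']
  simp [Finset.mem_powersetCard_univ]

lemma monomial_mem_sqIdeal {n : ℕ} {d : Fin n →₀ ℕ} {j : Fin n} (h : 2 ≤ d j) (c : ZMod 2) :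
    (monomial d c : MvPolynomial (Fin n) (ZMod 2)) ∈ sqIdeal n := by
  have hle : Finsupp.single j 2 ≤ d := Finsupp.single_le_iff.mpr h
  have heq : (monomial d c : MvPolynomial (Fin n) (ZMod 2))
      = X j ^ 2 * monomial (d - Finsupp.single j 2) c := by
    rw [X_pow_eq_monomial, monomial_mul, one_mul, add_tsub_cancel_of_le hle]
  rw [heq]
  exact Ideal.mul_mem_right _ _ (Ideal.subset_span ⟨j, rfl⟩)

lemma coeff_msf_eq_zero_of_mem {n : ℕ} {p : MvPolynomial (Fin n) (ZMod 2)}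
    (hp : p ∈ sqIdeal n) (S : Finset (Fin n)) : coeff (msf S) p = 0 := by
  classical
  revert S
  refine Submodule.span_induction ?_ ?_ ?_ ?_ hp
  · rintro _ ⟨i, rfl⟩ S
    show coeff (msf S) (X i ^ 2) = 0
    rw [X_pow_eq_monomial, coeff_monomial, if_neg]
    intro h
    have h2 : (Finsupp.single i 2 : Fin n →₀ ℕ) i = msf S i := by rw [h]
    rw [Finsupp.single_apply, if_pos rfl] at h2
    have h1 := msf_apply_le_one S i
    omega
  · intro S; simp
  · intro x y _ _ hx hy S; rw [coeff_add, hx S, hy S, add_zero]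
  · intro r x _ hx S
    rw [smul_eq_mul, coeff_mul]
    refine Finset.sum_eq_zero fun de hde => ?_
    rw [Finset.HasAntidiagonal.mem_antidiagonal] at hde
    have hle : de.2 ≤ msf S := hde ▸ le_add_self
    have h1 : ∀ i, de.2 i ≤ 1 := fun i => (hle i).trans (msf_apply_le_one S i)
    rw [eq_msf_of_le_one h1, hx, mul_zero]

lemma mem_sqIdeal_of_coeff {n : ℕ} {p : MvPolynomial (Fin n) (ZMod 2)}
    (h : ∀ S, coeff (msf S) p = 0) : p ∈ sqIdeal n := by
  classical
  rw [p.as_sum]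
  refine Submodule.sum_mem _ fun d _ => ?_
  by_cases hsq : ∀ i, d i ≤ 1
  · rw [eq_msf_of_le_one hsq, h, map_zero]
    exact Submodule.zero_mem _
  · push_neg at hsq
    obtain ⟨j, hj⟩ := hsq
    exact monomial_mem_sqIdeal (j := j) (by omega) _

lemma exists_perm_image {n : ℕ} {S T : Finset (Fin n)} (h : S.card = T.card) :
    ∃ g : Equiv.Perm (Fin n), S.image g = T := by
  classical
  have hc : (Sᶜ).card = (Tᶜ).card := by
    rw [Finset.card_compl, Finset.card_compl, h]
  let e1 : {x // x ∈ S} ≃ {x // x ∈ T} := Finset.equivOfCardEq h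
  let e2 : {x // ¬ x ∈ S} ≃ {x // ¬ x ∈ T} :=
    ((Equiv.subtypeEquivRight (fun x => (Finset.mem_compl).symm)).trans
      (Finset.equivOfCardEq hc)).trans
      (Equiv.subtypeEquivRight (fun x => Finset.mem_compl))
  refine ⟨(Equiv.sumCompl (· ∈ S)).symm.trans ((e1.sumCongr e2).trans
    (Equiv.sumCompl (· ∈ T))), ?_⟩
  have hsub : S.image ((Equiv.sumCompl (· ∈ S)).symm.trans ((e1.sumCongr e2).trans
      (Equiv.sumCompl (· ∈ T)))) ⊆ T := by
    intro y hy
    rw [Finset.mem_image] at hy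
    obtain ⟨x, hx, rfl⟩ := hy
    simp only [Equiv.trans_apply, Equiv.sumCompl_symm_apply_of_pos hx,
      Equiv.sumCongr_apply, Sum.map_inl, Equiv.sumCompl_apply_inl]
    exact (e1 ⟨x, hx⟩).2
  refine Finset.eq_of_subset_of_card_le hsub ?_
  rw [Finset.card_image_of_injective _ (Equiv.injective _), h]

lemma permAct_mk {n : ℕ} (g : Equiv.Perm (Fin n)) (p : MvPolynomial (Fin n) (ZMod 2)) :
    permAct n g (Ideal.Quotient.mk (sqIdeal n) p)
      = Ideal.Quotient.mk (sqIdeal n) (rename g p) := rfl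

theorem stmt4 (n : ℕ) :
    ∃ b : Module.Basis (Fin (n + 1)) (ZMod 2) (invSubmodule n),
      ∀ i : Fin (n + 1),
        (b i : ExtF2 n) = Ideal.Quotient.mk (sqIdeal n) (esymm (Fin n) (ZMod 2) i) := by
  classical
  have hcard : ∀ S : Finset (Fin n), S.card < n + 1 := fun S =>
    Nat.lt_succ_of_le (by simpa using Finset.card_le_univ S)
  have hmem : ∀ i : Fin (n + 1),
      Ideal.Quotient.mk (sqIdeal n) (esymm (Fin n) (ZMod 2) i) ∈ invSubmodule n := by
    intro i g
    rw [permAct_mk, esymm_isSymmetric (Fin n) (ZMod 2) i g]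
  set e : Fin (n + 1) → invSubmodule n :=
    fun i => ⟨Ideal.Quotient.mk (sqIdeal n) (esymm (Fin n) (ZMod 2) i), hmem i⟩ with he
  have hT : ∀ i : Fin (n + 1), ∃ T : Finset (Fin n), T.card = (i : ℕ) := by
    intro i
    obtain ⟨T, -, hT⟩ := Finset.exists_subset_card_eq
      (s := (Finset.univ : Finset (Fin n))) (n := (i : ℕ))
      (by simpa using Nat.lt_succ_iff.mp i.2)
    exact ⟨T, hT⟩
  choose T hTcard using hT
  have key : ∀ (c : Fin (n + 1) → ZMod 2) (S : Finset (Fin n)),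
      coeff (msf S) (∑ i : Fin (n + 1), c i • esymm (Fin n) (ZMod 2) i)
        = c ⟨S.card, hcard S⟩ := by
    intro c S
    rw [coeff_sum]
    simp only [coeff_smul, coeff_msf_esymm, smul_eq_mul]
    rw [Finset.sum_eq_single (⟨S.card, hcard S⟩ : Fin (n + 1))]
    · simp
    · intro i _ hi
      rw [if_neg, mul_zero]
      intro h
      exact hi (Fin.ext h.symm)
    · intro h; exact absurd (Finset.mem_univ _) h
  have hli : LinearIndependent (ZMod 2) e := by
    rw [Fintype.linearIndependent_iff]
    intro c hc i
    have h0 : Ideal.Quotient.mk (sqIdeal n)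
        (∑ j : Fin (n + 1), c j • esymm (Fin n) (ZMod 2) j) = 0 := by
      have := congrArg Subtype.val hc
      have hs : ∀ (r : ZMod 2) (q : MvPolynomial (Fin n) (ZMod 2)),
          Ideal.Quotient.mk (sqIdeal n) (r • q) = r • Ideal.Quotient.mk (sqIdeal n) q :=
        fun r q => map_smul (Ideal.Quotient.mkₐ (ZMod 2) (sqIdeal n)) r q
      simpa [he, map_sum, map_smul, hs] using this
    have hmem' := Ideal.Quotient.eq_zero_iff_mem.mp h0
    have hz := coeff_msf_eq_zero_of_mem hmem' (T i)
    rw [key] at hz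
    have hidx : (⟨(T i).card, hcard (T i)⟩ : Fin (n + 1)) = i := Fin.ext (hTcard i)
    rwa [hidx] at hz
  have hsp : ⊤ ≤ Submodule.span (ZMod 2) (Set.range e) := by
    rintro ⟨x, hx⟩ -
    obtain ⟨p, rfl⟩ := Ideal.Quotient.mk_surjective x
    set c : Fin (n + 1) → ZMod 2 := fun i => coeff (msf (T i)) p with hc
    have hS : ∀ S : Finset (Fin n), coeff (msf S) p = c ⟨S.card, hcard S⟩ := by
      intro S
      obtain ⟨g, hg⟩ := exists_perm_image
        (S := T ⟨S.card, hcard S⟩) (T := S) (by rw [hTcard])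
      have hinv : Ideal.Quotient.mk (sqIdeal n) (rename (⇑g) p)
          = Ideal.Quotient.mk (sqIdeal n) p := by
        rw [← permAct_mk]; exact hx g
      have hd : rename (⇑g) p - p ∈ sqIdeal n := Ideal.Quotient.eq.mp hinv
      have h1 : coeff (msf S) (rename (⇑g) p) = coeff (msf S) p := by
        have := coeff_msf_eq_zero_of_mem hd S
        rw [coeff_sub, sub_eq_zero] at this
        exact this
      have h2 : coeff (msf S) (rename (⇑g) p) = c ⟨S.card, hcard S⟩ := by
        conv_lhs => rw [← hg, ← msf_mapDomain, coeff_rename_mapDomain _ g.injective]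
      rw [← h1, h2]
    have hq : p - (∑ i : Fin (n + 1), c i • esymm (Fin n) (ZMod 2) i) ∈ sqIdeal n := by
      refine mem_sqIdeal_of_coeff fun S => ?_
      rw [coeff_sub, key, hS S, sub_self]
    have hxeq : (⟨Ideal.Quotient.mk (sqIdeal n) p, hx⟩ : invSubmodule n)
        = ∑ i : Fin (n + 1), c i • e i := by
      apply Subtype.ext
      have hmk : Ideal.Quotient.mk (sqIdeal n) p
          = Ideal.Quotient.mk (sqIdeal n) (∑ i : Fin (n + 1), c i • esymm (Fin n) (ZMod 2) i) :=
        Ideal.Quotient.eq.mpr hq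
      have hsmul : ∀ (r : ZMod 2) (q : MvPolynomial (Fin n) (ZMod 2)),
          Ideal.Quotient.mk (sqIdeal n) (r • q) = r • Ideal.Quotient.mk (sqIdeal n) q :=
        fun r q => map_smul (Ideal.Quotient.mkₐ (ZMod 2) (sqIdeal n)) r q
      show Ideal.Quotient.mk (sqIdeal n) p
          = ((∑ i : Fin (n + 1), c i • e i : invSubmodule n) : ExtF2 n)
      rw [hmk, map_sum]
      simp [he, hsmul]
    rw [hxeq]
    exact Submodule.sum_mem _ fun i _ =>
      Submodule.smul_mem _ _ (Submodule.subset_span ⟨i, rfl⟩)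
  refine ⟨Module.Basis.mk hli hsp, fun i => ?_⟩
  rw [Module.Basis.mk_apply]
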